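/- Let M = [[a,b],[c,d]] ∈ SL(2,ℝ) with c ≠ 0 and cx + d = 0, and let C be the circle centered at x + y·i with radius y > 0. Then the image of C under the Möbius transformation z ↦ (az+b)/(cz+d) is the horizontal line {z : Im z = 1/(2c²y)}. -/

import Mathlib

open Complex

/-- If `c ≠ 0` and `c·x + d = 0` (so the pole of the Möbius map lies at the
tangency point `x` of the circle), then the Möbius transformation maps the circle centered at
`x + y·i` with radius `y > 0` (minus the pole `x`, which goes to `∞`) onto the horizontal line
`Im z = 1/(2c²y)`. -/
theorem mobius_image_of_circle_through_pole
    (a b c d x y : ℝ) (hdet : a * d - b * c = 1) (hc : c ≠ 0)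
    (hcxd : c * x + d = 0) (hy : 0 < y) :
    (fun z : ℂ => (a * z + b) / (c * z + d)) ''
        ({z : ℂ | ‖z - (x + y * I)‖ = y} \ {(x : ℂ)}) =
      {w : ℂ | w.im = 1 / (2 * c ^ 2 * y)} := by
  have hd' : d = -(c * x) := by linarith
  have hab : c * (a * x + b) = -1 := by
    have h := hdet; rw [hd'] at h; linear_combination -h
  ext w
  simp only [Set.mem_image, Set.mem_diff, Set.mem_setOf_eq, Set.mem_singleton_iff]
  constructor
  · rintro ⟨z, ⟨hz, hzx⟩, rfl⟩
    have h2 := congrArg (·^2) hz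
    have h2' : (z.re - x) * (z.re - x) + (z.im - y) * (z.im - y) = y ^ 2 := by
      simpa [Complex.sq_norm, Complex.normSq_apply, Complex.sub_re, Complex.sub_im,
        Complex.add_re, Complex.add_im, Complex.mul_re, Complex.mul_im] using h2
    have hcirc : (z.re - x)^2 + (z.im - y)^2 = y^2 := by linear_combination h2'
    have hq : z.im ≠ 0 := by
      intro h0
      apply hzx
      have hre : z.re = x := by nlinarith
      apply Complex.ext <;> simp [hre, h0]
    have hN : Complex.normSq ((c:ℂ)*z + d) = c^2 * (2 * y * z.im) := by
      simp only [Complex.normSq_apply, Complex.add_re, Complex.add_im, Complex.mul_re,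
        Complex.mul_im, Complex.ofReal_re, Complex.ofReal_im]
      rw [hd']
      nlinarith [hcirc]
    have hN0 : Complex.normSq ((c:ℂ)*z + d) ≠ 0 := by
      rw [hN]; positivity
    show ((a * z + b) / (c * z + d)).im = 1 / (2 * c ^ 2 * y)
    rw [Complex.div_im, hN]
    simp only [Complex.add_re, Complex.add_im, Complex.mul_re, Complex.mul_im,
      Complex.ofReal_re, Complex.ofReal_im]
    field_simp
    linear_combination z.im * hdet
  · intro hw
    set v : ℂ := c * c * w - c * a with hv_def
    have hvim : v.im = 1 / (2*y) := by
      simp only [hv_def, Complex.sub_im, Complex.mul_im, Complex.mul_re,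
        Complex.ofReal_im, Complex.ofReal_re, hw]
      field_simp
      ring
    have hv0 : v ≠ 0 := by
      intro h
      rw [h, Complex.zero_im] at hvim
      have hpos : (0:ℝ) < 1/(2*y) := by positivity
      linarith
    have hNv : Complex.normSq v ≠ 0 := by simpa [Complex.normSq_eq_zero] using hv0
    refine ⟨(x:ℂ) - v⁻¹, ⟨?_, ?_⟩, ?_⟩
    · have heq : ((x:ℂ) - v⁻¹ - (x + y*I)) = -((1 + (y:ℂ)*I*v)/v) := by
        field_simp
        ring
      have h1 : Complex.normSq (1 + (y:ℂ)*I*v) = y^2 * Complex.normSq v := by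
        simp only [Complex.normSq_apply, Complex.add_re, Complex.add_im, Complex.mul_re,
          Complex.mul_im, Complex.one_re, Complex.one_im, Complex.I_re, Complex.I_im,
          Complex.ofReal_re, Complex.ofReal_im, hvim]
        field_simp
        ring
      have key : ‖1 + (y:ℂ)*I*v‖ = y * ‖v‖ := by
        rw [Complex.norm_def, Complex.norm_def, h1, Real.sqrt_mul (sq_nonneg y),
          Real.sqrt_sq hy.le]
      rw [heq, norm_neg, norm_div, key,
        mul_div_assoc, div_self (norm_ne_zero_iff.mpr hv0), mul_one]
    · intro h
      have hinv : v⁻¹ = 0 := by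
        have h' := congrArg (fun t => (x:ℂ) - t) h
        simpa using h'
      exact hv0 (inv_eq_zero.mp hinv)
    · show ((a:ℂ) * ((x:ℂ) - v⁻¹) + b) / ((c:ℂ) * ((x:ℂ) - v⁻¹) + d) = w
      have hcC : (c:ℂ) ≠ 0 := by exact_mod_cast hc
      have hdC : (d:ℂ) = -((c:ℂ) * x) := by exact_mod_cast hd'
      have habC : (c:ℂ) * ((a:ℂ) * x + b) = -1 := by exact_mod_cast hab
      have hiv : v⁻¹ ≠ 0 := inv_ne_zero hv0
      have hden2 : (c:ℂ) * ((x:ℂ) - v⁻¹) + d ≠ 0 := by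
        rw [hdC]
        have h3 : (c:ℂ) * ((x:ℂ) - v⁻¹) + -((c:ℂ)*(x:ℂ)) = -((c:ℂ) * v⁻¹) := by ring
        rw [h3]
        exact neg_ne_zero.mpr (mul_ne_zero hcC hiv)
      rw [div_eq_iff hden2, hdC]
      field_simp [hv0]
      rw [hv_def]
      linear_combination ((c:ℂ)*w - a) * habC
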